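/- Let (K^{•,•}, d', d'') be a bounded double cochain complex of modules with total differential D = d' + d''. Then K satisfies the d'd''-lemma if and only if Ker(d') ∩ Ker(d'') ∩ (Im(d') + Im(d'')) = Im(d'd''). -/

import Mathlib

section DeligneAux

open DirectSum

variable {R V : Type*} [CommRing R] [AddCommGroup V] [Module R V]
variable {𝒦 : ℤ × ℤ → Submodule R V}

/-- The projection onto the `i`-th graded piece of an internal direct sum. -/
noncomputable def dlProj (h : DirectSum.IsInternal 𝒦) (i : ℤ × ℤ) : V →ₗ[R] V :=
  (𝒦 i).subtype ∘ₗ (DirectSum.component R (ℤ × ℤ) (fun j => ↥(𝒦 j)) i) ∘ₗ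
    (LinearEquiv.ofBijective (DirectSum.coeLinearMap 𝒦) h).symm.toLinearMap

theorem dlProj_mem (h : DirectSum.IsInternal 𝒦) (i : ℤ × ℤ) (v : V) :
    dlProj h i v ∈ 𝒦 i := by
  simp only [dlProj, LinearMap.comp_apply]
  exact Submodule.coe_mem _

theorem dlProj_of_mem_same (h : DirectSum.IsInternal 𝒦) {i : ℤ × ℤ} {v : V}
    (hv : v ∈ 𝒦 i) : dlProj h i v = v := by
  simp only [dlProj, LinearMap.comp_apply]
  have := h.ofBijective_coeLinearMap_of_mem (i := i) hv
  erw [this]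
  rfl

theorem dlProj_of_mem_ne (h : DirectSum.IsInternal 𝒦) {i j : ℤ × ℤ} {v : V}
    (hij : j ≠ i) (hv : v ∈ 𝒦 j) : dlProj h i v = 0 := by
  simp only [dlProj, LinearMap.comp_apply]
  have := h.ofBijective_coeLinearMap_of_mem_ne (i := j) (j := i) hij hv
  erw [this]
  rfl

/-- Projections commute with graded maps. -/
theorem dlProj_comm (h : DirectSum.IsInternal 𝒦) (f : V →ₗ[R] V) (σ : ℤ × ℤ)
    (hf : ∀ j, ∀ x ∈ 𝒦 j, f x ∈ 𝒦 (j + σ)) (i : ℤ × ℤ) (v : V) :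
    dlProj h (i + σ) (f v) = f (dlProj h i v) := by
  have hv : v ∈ ⨆ j, 𝒦 j := by
    rw [h.submodule_iSup_eq_top]; trivial
  refine Submodule.iSup_induction (motive := fun v =>
      dlProj h (i + σ) (f v) = f (dlProj h i v)) 𝒦 hv (fun j w hw => ?_) (by simp)
      (fun x y hx hy => by simp only [map_add, hx, hy])
  show dlProj h (i + σ) (f w) = f (dlProj h i w)
  by_cases hij : j = i
  · subst hij
    rw [dlProj_of_mem_same h hw, dlProj_of_mem_same h (hf j w hw)]
  · rw [dlProj_of_mem_ne h hij hw,
      dlProj_of_mem_ne h (fun hh => hij (by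
        have : j + σ - σ = i + σ - σ := by rw [hh]
        simpa using this)) (hf j w hw), map_zero]

theorem dlProj_sum (h : DirectSum.IsInternal 𝒦) (v : V) :
    ∃ s : Finset (ℤ × ℤ), ∑ i ∈ s, dlProj h i v = v := by
  classical
  set e := LinearEquiv.ofBijective (DirectSum.coeLinearMap 𝒦) h with he
  refine ⟨(e.symm v).support, ?_⟩
  have key : ∀ i, dlProj h i v = ((e.symm v) i : V) := fun i => rfl
  calc ∑ i ∈ (e.symm v).support, dlProj h i v
      = ∑ i ∈ (e.symm v).support,
          DirectSum.coeLinearMap 𝒦 (DirectSum.of (fun j => ↥(𝒦 j)) i ((e.symm v) i)) := by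
        refine Finset.sum_congr rfl fun i _ => ?_
        rw [key i, DirectSum.coeLinearMap_of]
    _ = DirectSum.coeLinearMap 𝒦 (∑ i ∈ (e.symm v).support,
          DirectSum.of (fun j => ↥(𝒦 j)) i ((e.symm v) i)) := by rw [map_sum]
    _ = DirectSum.coeLinearMap 𝒦 (e.symm v) := by rw [DirectSum.sum_support_of]
    _ = v := e.apply_symm_apply v

end DeligneAux

/- STATEMENT 1: An equivalent characterization of the d'd''-lemma for a bounded
double cochain complex (K, d', d'') of modules with total differential D = d' + d''. -/
theorem deligne_lemma_equiv_1 {R V : Type*} [CommRing R] [AddCommGroup V] [Module R V]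
    (𝒦 : ℤ × ℤ → Submodule R V)
    (hinternal : DirectSum.IsInternal 𝒦)
    (hbounded : {pq : ℤ × ℤ | 𝒦 pq ≠ ⊥}.Finite)
    (d' d'' : V →ₗ[R] V)
    (hd'deg : ∀ p q : ℤ, ∀ x ∈ 𝒦 (p, q), d' x ∈ 𝒦 (p + 1, q))
    (hd''deg : ∀ p q : ℤ, ∀ x ∈ 𝒦 (p, q), d'' x ∈ 𝒦 (p, q + 1))
    (hd'sq : d' ∘ₗ d' = 0) (hd''sq : d'' ∘ₗ d'' = 0)
    (hanti : d' ∘ₗ d'' + d'' ∘ₗ d' = 0) :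
    (LinearMap.ker d' ⊓ LinearMap.ker d'' ⊓ LinearMap.range (d' + d'') =
        LinearMap.range (d' ∘ₗ d'')) ↔
      (LinearMap.ker d' ⊓ LinearMap.ker d'' ⊓ (LinearMap.range d' ⊔ LinearMap.range d'') = LinearMap.range (d' ∘ₗ d'')) := by
  have hd'sq' : ∀ v, d' (d' v) = 0 := fun v => LinearMap.congr_fun hd'sq v
  have hd''sq' : ∀ v, d'' (d'' v) = 0 := fun v => LinearMap.congr_fun hd''sq v
  have hanti' : ∀ v, d' (d'' v) + d'' (d' v) = 0 := fun v => by
    simpa using LinearMap.congr_fun hanti v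
  -- graded hypotheses in additive form
  have hf' : ∀ j : ℤ × ℤ, ∀ x ∈ 𝒦 j, d' x ∈ 𝒦 (j + ((1 : ℤ), (0 : ℤ))) := by
    rintro ⟨p, q⟩ x hx
    simpa using hd'deg p q x hx
  have hf'' : ∀ j : ℤ × ℤ, ∀ x ∈ 𝒦 j, d'' x ∈ 𝒦 (j + ((0 : ℤ), (1 : ℤ))) := by
    rintro ⟨p, q⟩ x hx
    simpa using hd''deg p q x hx
  -- the image of d'd'' is contained in everything in sight
  have hdd_ker' : ∀ c, d' (d' (d'' c)) = 0 := fun c => hd'sq' _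
  have hdd_ker'' : ∀ c, d'' (d' (d'' c)) = 0 := fun c => by
    have h1 := hanti' (d'' c)
    rw [hd''sq' c, map_zero, zero_add] at h1
    exact h1
  have hsub1 : LinearMap.range (d' ∘ₗ d'') ≤
      LinearMap.ker d' ⊓ LinearMap.ker d'' ⊓ LinearMap.range (d' + d'') := by
    rintro x ⟨c, rfl⟩
    refine ⟨⟨?_, ?_⟩, ⟨d'' c, ?_⟩⟩
    · exact hdd_ker' c
    · exact hdd_ker'' c
    · simp only [LinearMap.add_apply, LinearMap.comp_apply, hd''sq' c, add_zero]
  have hsub2 : LinearMap.range (d' ∘ₗ d'') ≤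
      LinearMap.ker d' ⊓ LinearMap.ker d'' ⊓ (LinearMap.range d' ⊔ LinearMap.range d'') := by
    rintro x ⟨c, rfl⟩
    refine ⟨⟨hdd_ker' c, hdd_ker'' c⟩, Submodule.mem_sup_left ⟨d'' c, rfl⟩⟩
  constructor
  · -- hard direction
    intro hA
    refine le_antisymm ?_ hsub2
    intro x hx
    simp only [Submodule.mem_inf, LinearMap.mem_ker] at hx
    obtain ⟨⟨hx1, hx2⟩, hx3⟩ := hx
    rw [Submodule.mem_sup] at hx3
    obtain ⟨u, hu, w, hw, rfl⟩ := hx3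
    obtain ⟨a, rfl⟩ := hu
    obtain ⟨b, rfl⟩ := hw
    -- decompose into graded components
    obtain ⟨s, hs⟩ := dlProj_sum hinternal (d' a + d'' b)
    rw [← hs]
    refine Submodule.sum_mem _ fun i _ => ?_
    set A := dlProj hinternal (i - ((1 : ℤ), (0 : ℤ))) a with hA_def
    set B := dlProj hinternal (i - ((0 : ℤ), (1 : ℤ))) b with hB_def
    have hAmem : A ∈ 𝒦 (i - ((1 : ℤ), (0 : ℤ))) := dlProj_mem _ _ _
    have hBmem : B ∈ 𝒦 (i - ((0 : ℤ), (1 : ℤ))) := dlProj_mem _ _ _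
    have hcomm' : ∀ (j : ℤ × ℤ) (v : V),
        dlProj hinternal (j + ((1 : ℤ), (0 : ℤ))) (d' v) = d' (dlProj hinternal j v) :=
      dlProj_comm hinternal d' _ hf'
    have hcomm'' : ∀ (j : ℤ × ℤ) (v : V),
        dlProj hinternal (j + ((0 : ℤ), (1 : ℤ))) (d'' v) = d'' (dlProj hinternal j v) :=
      dlProj_comm hinternal d'' _ hf''
    have hproj_d' : dlProj hinternal i (d' a) = d' A := by
      have := hcomm' (i - ((1 : ℤ), (0 : ℤ))) a
      rwa [sub_add_cancel] at this
    have hproj_d'' : dlProj hinternal i (d'' b) = d'' B := by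
      have := hcomm'' (i - ((0 : ℤ), (1 : ℤ))) b
      rwa [sub_add_cancel] at this
    have hxi : dlProj hinternal i (d' a + d'' b) = d' A + d'' B := by
      rw [map_add, hproj_d', hproj_d'']
    rw [hxi]
    -- the component is d'- and d''-closed
    have h1 : d' (d' A + d'' B) = 0 := by
      rw [← hxi, ← hcomm' i, hx1, map_zero]
    have h2 : d'' (d' A + d'' B) = 0 := by
      rw [← hxi, ← hcomm'' i, hx2, map_zero]
    have hd'd''B : d' (d'' B) = 0 := by
      have := h1
      rwa [map_add, hd'sq' A, zero_add] at this
    have hd''d'A : d'' (d' A) = 0 := by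
      have := h2
      rwa [map_add, hd''sq' B, add_zero] at this
    have hd'd''A : d' (d'' A) = 0 := by
      have := hanti' A
      rw [hd''d'A, add_zero] at this
      exact this
    have hd''d'B : d'' (d' B) = 0 := by
      have := hanti' B
      rw [hd'd''B, zero_add] at this
      exact this
    -- D A and D B are in ker d' ∩ ker d'' ∩ im D, hence in im d'd''
    have hDA : d' A + d'' A ∈ LinearMap.range (d' ∘ₗ d'') := by
      rw [← hA]
      refine Submodule.mem_inf.mpr ⟨Submodule.mem_inf.mpr ⟨?_, ?_⟩, ⟨A, by simp [LinearMap.add_apply]⟩⟩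
      · exact LinearMap.mem_ker.mpr (by rw [map_add, hd'sq' A, hd'd''A, add_zero])
      · exact LinearMap.mem_ker.mpr (by rw [map_add, hd''d'A, hd''sq' A, add_zero])
    have hDB : d' B + d'' B ∈ LinearMap.range (d' ∘ₗ d'') := by
      rw [← hA]
      refine Submodule.mem_inf.mpr ⟨Submodule.mem_inf.mpr ⟨?_, ?_⟩, ⟨B, by simp [LinearMap.add_apply]⟩⟩
      · exact LinearMap.mem_ker.mpr (by rw [map_add, hd'sq' B, hd'd''B, add_zero])
      · exact LinearMap.mem_ker.mpr (by rw [map_add, hd''d'B, hd''sq' B, add_zero])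
    obtain ⟨c, hc⟩ := hDA
    obtain ⟨c', hc'⟩ := hDB
    -- project the equation `d'd'' c = d'A + d''A` to degree i, picking out d'A
    have hne1 : i - ((1 : ℤ), (0 : ℤ)) + ((0 : ℤ), (1 : ℤ)) ≠ i := by
      intro hh
      have := congrArg Prod.fst hh
      simp at this
    have hne2 : i - ((0 : ℤ), (1 : ℤ)) + ((1 : ℤ), (0 : ℤ)) ≠ i := by
      intro hh
      have := congrArg Prod.fst hh
      simp at this
    have key1 : d' A ∈ LinearMap.range (d' ∘ₗ d'') := by
      have e1 : dlProj hinternal i (d' A + d'' A) = d' A := by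
        rw [map_add, dlProj_of_mem_same hinternal (by
              have := hf' _ _ hAmem
              rwa [sub_add_cancel] at this),
          dlProj_of_mem_ne hinternal hne1 (hf'' _ _ hAmem), add_zero]
      have e2 : dlProj hinternal i ((d' ∘ₗ d'') c)
          = d' (d'' (dlProj hinternal (i - ((1 : ℤ), (0 : ℤ)) - ((0 : ℤ), (1 : ℤ))) c)) := by
        rw [LinearMap.comp_apply]
        have s1 : dlProj hinternal i (d' (d'' c))
            = d' (dlProj hinternal (i - ((1 : ℤ), (0 : ℤ))) (d'' c)) := by
          have := hcomm' (i - ((1 : ℤ), (0 : ℤ))) (d'' c)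
          rwa [sub_add_cancel] at this
        have s2 : dlProj hinternal (i - ((1 : ℤ), (0 : ℤ))) (d'' c)
            = d'' (dlProj hinternal (i - ((1 : ℤ), (0 : ℤ)) - ((0 : ℤ), (1 : ℤ))) c) := by
          have := hcomm'' (i - ((1 : ℤ), (0 : ℤ)) - ((0 : ℤ), (1 : ℤ))) c
          rwa [sub_add_cancel] at this
        rw [s1, s2]
      refine ⟨dlProj hinternal (i - ((1 : ℤ), (0 : ℤ)) - ((0 : ℤ), (1 : ℤ))) c, ?_⟩
      rw [LinearMap.comp_apply, ← e2, hc, e1]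
    have key2 : d'' B ∈ LinearMap.range (d' ∘ₗ d'') := by
      have e1 : dlProj hinternal i (d' B + d'' B) = d'' B := by
        rw [map_add, dlProj_of_mem_ne hinternal hne2 (hf' _ _ hBmem),
          dlProj_of_mem_same hinternal (by
              have := hf'' _ _ hBmem
              rwa [sub_add_cancel] at this), zero_add]
      have e2 : dlProj hinternal i ((d' ∘ₗ d'') c')
          = d' (d'' (dlProj hinternal (i - ((1 : ℤ), (0 : ℤ)) - ((0 : ℤ), (1 : ℤ))) c')) := by
        rw [LinearMap.comp_apply]
        have s1 : dlProj hinternal i (d' (d'' c'))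
            = d' (dlProj hinternal (i - ((1 : ℤ), (0 : ℤ))) (d'' c')) := by
          have := hcomm' (i - ((1 : ℤ), (0 : ℤ))) (d'' c')
          rwa [sub_add_cancel] at this
        have s2 : dlProj hinternal (i - ((1 : ℤ), (0 : ℤ))) (d'' c')
            = d'' (dlProj hinternal (i - ((1 : ℤ), (0 : ℤ)) - ((0 : ℤ), (1 : ℤ))) c') := by
          have := hcomm'' (i - ((1 : ℤ), (0 : ℤ)) - ((0 : ℤ), (1 : ℤ))) c'
          rwa [sub_add_cancel] at this
        rw [s1, s2]
      refine ⟨dlProj hinternal (i - ((1 : ℤ), (0 : ℤ)) - ((0 : ℤ), (1 : ℤ))) c', ?_⟩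
      rw [LinearMap.comp_apply, ← e2, hc', e1]
    exact Submodule.add_mem _ key1 key2
  · -- easy direction
    intro hB
    refine le_antisymm ?_ hsub1
    intro x hx
    simp only [Submodule.mem_inf] at hx
    obtain ⟨⟨hx1, hx2⟩, hx3⟩ := hx
    obtain ⟨w, rfl⟩ := hx3
    rw [← hB]
    refine ⟨⟨hx1, hx2⟩, ?_⟩
    have : (d' + d'') w = d' w + d'' w := rfl
    rw [this]
    exact Submodule.add_mem _ (Submodule.mem_sup_left ⟨w, rfl⟩)
      (Submodule.mem_sup_right ⟨w, rfl⟩)
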